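/- Fix integers m ≥ 2 and k with 1 ≤ k ≤ m, and let 0 ≤ r ≤ k − 1. Then the number of code words of length k over base dimension m whose last set A_k has cardinality r equals the number of increasing trees on the vertex set {0, 1, …, k} in which the root 0 has degree r + 1; here an increasing tree is a tree (connected acyclic graph) on {0, 1, …, k} in which every vertex v ≠ 0 has exactly one neighbor with a smaller label (equivalently, labels increase along every path moving away from the root 0). -/

import Mathlib

/-- A code word of length `k` over base dimension `m`: a sequence
`A 1, A 2, …, A k` of finite sets of integers, each contained in `{2, 3, …}`,
such that `A 1 = ∅`, for each `2 ≤ j ≤ k` we have `A j ⊆ A (j-1) ∪ {j}`,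
and `|A j| ≤ m - 1` for all `j`.  (We normalize `A i = ∅` outside `1 ≤ i ≤ k`.) -/
def IsCodeWord (m k : ℕ) (A : ℕ → Finset ℕ) : Prop :=
  A 1 = ∅ ∧
  (∀ i, 1 ≤ i → i ≤ k → ∀ x ∈ A i, 2 ≤ x) ∧
  (∀ j, 2 ≤ j → j ≤ k → A j ⊆ A (j - 1) ∪ {j}) ∧
  (∀ i, 1 ≤ i → i ≤ k → (A i).card ≤ m - 1) ∧
  (∀ i, i = 0 ∨ k < i → A i = ∅)

/-- `multCW k A j` is `n_j`: the number of indices `i` (with `1 ≤ i ≤ k`)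
such that `j ∈ A i`. -/
def multCW (k : ℕ) (A : ℕ → Finset ℕ) (j : ℕ) : ℕ :=
  ((Finset.Icc 1 k).filter (fun i => j ∈ A i)).card

/-- `N m k r` is the number of code words of length `k` over base dimension `m`
whose last set `A k` has cardinality `r`. -/
noncomputable def N (m k r : ℕ) : ℕ :=
  {A : ℕ → Finset ℕ | IsCodeWord m k A ∧ (A k).card = r}.ncard

/-- An increasing tree on the vertex set `{0, 1, …, k}` (as `Fin (k+1)`):
a tree in which every vertex `v ≠ 0` has exactly one neighbor with a smaller
label, i.e. labels increase along every path moving away from the root `0`. -/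
def IsIncreasingTree {k : ℕ} (G : SimpleGraph (Fin (k + 1))) : Prop :=
  G.IsTree ∧ ∀ v : Fin (k + 1), v ≠ 0 → ∃! w : Fin (k + 1), G.Adj v w ∧ w < v



open Finset SimpleGraph

/-- The graph on `Fin (k+1)` determined by a parent function `p`. -/
def mkGraph (k : ℕ) (p : ℕ → ℕ) : SimpleGraph (Fin (k + 1)) :=
  SimpleGraph.fromRel (fun v w => v ≠ 0 ∧ p v.val = w.val)

/-- Validity of a parent function. -/
def ValidP (k : ℕ) (p : ℕ → ℕ) : Prop := ∀ v, 1 ≤ v → v ≤ k → p v < v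

variable {k : ℕ}

lemma fin_ne_zero_iff {v : Fin (k + 1)} : v ≠ 0 ↔ 1 ≤ v.val := by
  rw [Ne, Fin.ext_iff, Fin.val_zero]
  omega

lemma mkGraph_adj {p : ℕ → ℕ} (hp : ValidP k p) (v w : Fin (k + 1)) :
    (mkGraph k p).Adj v w ↔ (v ≠ 0 ∧ p v.val = w.val) ∨ (w ≠ 0 ∧ p w.val = v.val) := by
  rw [mkGraph, SimpleGraph.fromRel_adj]
  constructor
  · rintro ⟨-, h⟩; exact h
  · intro h
    refine ⟨?_, h⟩
    rcases h with ⟨hv, hpv⟩ | ⟨hw, hpw⟩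
    · intro hvw
      have h1 : 1 ≤ v.val := fin_ne_zero_iff.mp hv
      have := hp v.val h1 (Nat.lt_succ_iff.mp v.isLt)
      rw [hpv, hvw] at this
      exact lt_irrefl _ this
    · intro hvw
      have h1 : 1 ≤ w.val := fin_ne_zero_iff.mp hw
      have := hp w.val h1 (Nat.lt_succ_iff.mp w.isLt)
      rw [hpw, ← hvw] at this
      exact lt_irrefl _ this

lemma mkGraph_congr {p q : ℕ → ℕ} (h : ∀ v, 1 ≤ v → v ≤ k → p v = q v) :
    mkGraph k p = mkGraph k q := by
  unfold mkGraph
  congr 1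
  funext v w
  by_cases hv : v = 0
  · simp [hv]
  · rw [h v.val (fin_ne_zero_iff.mp hv) (Nat.lt_succ_iff.mp v.isLt)]

/-- the parent of `v` as an element of `Fin (k+1)` -/
def parFin {k : ℕ} (p : ℕ → ℕ) (v : Fin (k + 1)) : Fin (k + 1) :=
  ⟨p v.val % (k + 1), Nat.mod_lt _ (Nat.succ_pos k)⟩

lemma parFin_val {p : ℕ → ℕ} (hp : ValidP k p) {v : Fin (k + 1)} (hv : v ≠ 0) :
    (parFin p v).val = p v.val := by
  have h2 := hp v.val (fin_ne_zero_iff.mp hv) (Nat.lt_succ_iff.mp v.isLt)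
  have hlt : p v.val < k + 1 := by
    have := Nat.lt_succ_iff.mp v.isLt
    omega
  simp [parFin, Nat.mod_eq_of_lt hlt]

lemma parFin_lt {p : ℕ → ℕ} (hp : ValidP k p) {v : Fin (k + 1)} (hv : v ≠ 0) :
    parFin p v < v := by
  rw [Fin.lt_def, parFin_val hp hv]
  exact hp v.val (fin_ne_zero_iff.mp hv) (Nat.lt_succ_iff.mp v.isLt)

lemma mkGraph_adj_parFin {p : ℕ → ℕ} (hp : ValidP k p) {v : Fin (k + 1)} (hv : v ≠ 0) :
    (mkGraph k p).Adj v (parFin p v) := by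
  rw [mkGraph_adj hp]
  exact Or.inl ⟨hv, (parFin_val hp hv).symm⟩

lemma mkGraph_existsUnique {p : ℕ → ℕ} (hp : ValidP k p) {v : Fin (k + 1)} (hv : v ≠ 0) :
    ∃! w : Fin (k + 1), (mkGraph k p).Adj v w ∧ w < v := by
  refine ⟨parFin p v, ⟨mkGraph_adj_parFin hp hv, parFin_lt hp hv⟩, ?_⟩
  rintro w ⟨hadj, hlt⟩
  rw [mkGraph_adj hp] at hadj
  rcases hadj with ⟨-, hpv⟩ | ⟨hw, hpw⟩
  · exact Fin.ext (by rw [parFin_val hp hv, hpv])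
  · exfalso
    have h2 := hp w.val (fin_ne_zero_iff.mp hw) (Nat.lt_succ_iff.mp w.isLt)
    rw [hpw] at h2
    exact absurd h2 (not_lt.mpr (le_of_lt (Fin.lt_def.mp hlt)))

lemma mkGraph_connected {p : ℕ → ℕ} (hp : ValidP k p) : (mkGraph k p).Connected := by
  rw [connected_iff]
  refine ⟨?_, ⟨0⟩⟩
  have key : ∀ n : ℕ, ∀ v : Fin (k + 1), v.val = n → (mkGraph k p).Reachable v 0 := by
    intro n
    induction n using Nat.strong_induction_on with
    | _ n ih =>
      intro v hv
      by_cases h0 : v = 0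
      · rw [h0]
      · have hadj := mkGraph_adj_parFin hp h0
        have hlt : (parFin p v).val < n := by
          have := parFin_lt hp h0
          rw [Fin.lt_def] at this
          omega
        exact hadj.reachable.trans (ih _ hlt _ rfl)
  intro u v
  exact (key u.val u rfl).trans (key v.val v rfl).symm

lemma mkGraph_acyclic {p : ℕ → ℕ} (hp : ValidP k p) : (mkGraph k p).IsAcyclic := by
  intro u c hc
  classical
  have hne : c.support.toFinset.Nonempty := ⟨u, by simp⟩
  set v := c.support.toFinset.max' hne with hvdef
  have hvmem : v ∈ c.support := by
    have := c.support.toFinset.max'_mem hne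
    simpa using this
  have hvmax : ∀ a, a ∈ c.support → a ≤ v := fun a ha =>
    Finset.le_max' _ a (by simpa using ha)
  have hc' : (c.rotate v hvmem).IsCycle := hc.rotate hvmem
  have hmax' : ∀ a, a ∈ (c.rotate v hvmem).support → a ≤ v := by
    intro a ha
    rw [SimpleGraph.Walk.mem_support_iff _] at ha
    rcases ha with rfl | ha
    · exact le_refl _
    · exact hvmax a ((SimpleGraph.Walk.mem_support_iff _).mpr
        (Or.inr ((SimpleGraph.Walk.support_rotate c v hvmem).mem_iff.mp ha)))
  obtain ⟨b, hadj, q, heq⟩ := SimpleGraph.Walk.not_nil_iff.mp hc'.not_nil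
  rw [heq] at hc' hmax'
  rw [SimpleGraph.Walk.cons_isCycle_iff] at hc'
  obtain ⟨hqpath, hedge⟩ := hc'
  have hbv : b ≠ v := fun h => (mkGraph k p).irrefl (h ▸ hadj)
  have hbmem : b ∈ q.support := q.start_mem_support
  have hble : b < v := lt_of_le_of_ne
    (hmax' b (by rw [SimpleGraph.Walk.support_cons]; exact List.mem_cons_of_mem _ hbmem)) hbv
  have hv0 : v ≠ 0 := by
    intro h0
    rw [h0] at hble
    exact absurd hble (by simp [Fin.lt_def])
  have hqnil : ¬ q.reverse.Nil := SimpleGraph.Walk.not_nil_of_ne (fun h => hbv h.symm)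
  obtain ⟨x, hadj', q'', heq'⟩ := SimpleGraph.Walk.not_nil_iff.mp hqnil
  have hxv : x ≠ v := fun h => (mkGraph k p).irrefl (h ▸ hadj')
  have hxmemq : x ∈ q.support := by
    have : x ∈ q.reverse.support := by
      rw [heq', SimpleGraph.Walk.support_cons]
      exact List.mem_cons_of_mem _ q''.start_mem_support
    simpa [SimpleGraph.Walk.support_reverse] using this
  have hxle : x < v := lt_of_le_of_ne
    (hmax' x (by rw [SimpleGraph.Walk.support_cons]; exact List.mem_cons_of_mem _ hxmemq)) hxv
  obtain ⟨w, -, huniq⟩ := mkGraph_existsUnique hp hv0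
  have hb := huniq b ⟨hadj, hble⟩
  have hx := huniq x ⟨hadj', hxle⟩
  have hbx : b = x := hb.trans hx.symm
  have hmem : s(v, x) ∈ q.edges := by
    have : s(v, x) ∈ q.reverse.edges := by
      rw [heq', SimpleGraph.Walk.edges_cons]
      exact List.mem_cons_self
    rw [SimpleGraph.Walk.edges_reverse] at this
    exact List.mem_reverse.mp this
  rw [← hbx] at hmem
  exact hedge hmem

lemma mkGraph_isIncreasingTree {p : ℕ → ℕ} (hp : ValidP k p) :
    (mkGraph k p).IsTree ∧
      ∀ v : Fin (k + 1), v ≠ 0 → ∃! w : Fin (k + 1), (mkGraph k p).Adj v w ∧ w < v :=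
  ⟨⟨mkGraph_connected hp, mkGraph_acyclic hp⟩, fun _ hv => mkGraph_existsUnique hp hv⟩

lemma mkGraph_ncard_nbhd {p : ℕ → ℕ} (hp : ValidP k p) :
    ((mkGraph k p).neighborSet 0).ncard
      = ((Finset.Icc 1 k).filter (fun n => p n = 0)).card := by
  classical
  have h1 : (mkGraph k p).neighborSet 0
      = ↑(Finset.univ.filter (fun v : Fin (k + 1) => v ≠ 0 ∧ p v.val = 0)) := by
    ext v
    simp only [SimpleGraph.mem_neighborSet, Finset.coe_filter, Set.mem_setOf_eq,
      Finset.mem_univ, true_and]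
    rw [mkGraph_adj hp]
    constructor
    · rintro (⟨h, -⟩ | h)
      · exact absurd rfl h
      · exact ⟨h.1, by simpa using h.2⟩
    · intro h
      exact Or.inr ⟨h.1, by simpa using h.2⟩
  rw [h1, Set.ncard_coe_finset]
  apply Finset.card_bij (fun v _ => v.val)
  · intro a ha
    simp only [Finset.mem_filter, Finset.mem_univ, true_and] at ha
    simp only [Finset.mem_filter, Finset.mem_Icc]
    exact ⟨⟨fin_ne_zero_iff.mp ha.1, Nat.lt_succ_iff.mp a.isLt⟩, ha.2⟩
  · intro a ha b hb hab
    exact Fin.ext hab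
  · intro n hn
    simp only [Finset.mem_filter, Finset.mem_Icc] at hn
    refine ⟨⟨n, by omega⟩, ?_, rfl⟩
    simp only [Finset.mem_filter, Finset.mem_univ, true_and]
    exact ⟨fin_ne_zero_iff.mpr (by simp; omega), hn.2⟩

open Finset


variable {m k : ℕ} {A : ℕ → Finset ℕ}

lemma cw_range (h : IsCodeWord m k A) {i x : ℕ} (hx : x ∈ A i) :
    1 ≤ i ∧ i ≤ k ∧ 2 ≤ x := by
  have h1 : 1 ≤ i := by
    rcases Nat.eq_zero_or_pos i with rfl | hi
    · rw [h.2.2.2.2 0 (Or.inl rfl)] at hx; exact absurd hx (Finset.notMem_empty x)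
    · exact hi
  have h2 : i ≤ k := by
    by_contra hik
    rw [h.2.2.2.2 i (Or.inr (by omega))] at hx
    exact absurd hx (Finset.notMem_empty x)
  exact ⟨h1, h2, h.2.1 i h1 h2 x hx⟩

lemma cw_mem_le (h : IsCodeWord m k A) : ∀ i x, x ∈ A i → x ≤ i := by
  intro i
  induction i with
  | zero =>
    intro x hx
    rw [h.2.2.2.2 0 (Or.inl rfl)] at hx
    exact absurd hx (Finset.notMem_empty x)
  | succ n ih =>
    intro x hx
    obtain ⟨h1, h2, h3⟩ := cw_range h hx
    rcases Nat.lt_or_ge (n + 1) 2 with hn | hn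
    · have hn0 : n = 0 := by omega
      subst hn0
      rw [h.1] at hx; exact absurd hx (Finset.notMem_empty x)
    · have := h.2.2.1 (n + 1) hn h2 hx
      rw [Finset.mem_union, Finset.mem_singleton] at this
      rcases this with hmem | rfl
      · have := ih x (by simpa using hmem)
        omega
      · exact le_refl _

lemma cw_down (h : IsCodeWord m k A) :
    ∀ i x, x ∈ A i → ∀ i', x ≤ i' → i' ≤ i → x ∈ A i' := by
  intro i
  induction i with
  | zero =>
    intro x hx
    rw [h.2.2.2.2 0 (Or.inl rfl)] at hx
    exact absurd hx (Finset.notMem_empty x)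
  | succ n ih =>
    intro x hx i' hxi' hi'
    rcases Nat.eq_or_lt_of_le hi' with rfl | hlt
    · exact hx
    · -- i' ≤ n; show x ∈ A n first
      obtain ⟨h1, h2, h3⟩ := cw_range h hx
      have hxn : x ≤ n := by omega
      have hn2 : 2 ≤ n + 1 := by omega
      have := h.2.2.1 (n + 1) hn2 h2 hx
      rw [Finset.mem_union, Finset.mem_singleton] at this
      rcases this with hmem | rfl
      · exact ih x (by simpa using hmem) i' hxi' (by omega)
      · omega

lemma cw_mem_iff (h : IsCodeWord m k A) (j i : ℕ) :
    j ∈ A i ↔ 2 ≤ j ∧ j ≤ i ∧ i ≤ k ∧ i < j + multCW k A j := by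
  constructor
  · intro hj
    obtain ⟨h1, h2, h3⟩ := cw_range h hj
    have hji : j ≤ i := cw_mem_le h i j hj
    refine ⟨h3, hji, h2, ?_⟩
    have hsub : Finset.Icc j i ⊆ (Finset.Icc 1 k).filter (fun i' => j ∈ A i') := by
      intro a ha
      rw [Finset.mem_Icc] at ha
      rw [Finset.mem_filter, Finset.mem_Icc]
      exact ⟨⟨by omega, by omega⟩, cw_down h i j hj a ha.1 ha.2⟩
    have := Finset.card_le_card hsub
    rw [Nat.card_Icc] at this
    unfold multCW
    omega
  · rintro ⟨h2j, hji, hik, hlt⟩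
    by_contra hnot
    have hsub : (Finset.Icc 1 k).filter (fun i' => j ∈ A i') ⊆ Finset.Ico j i := by
      intro a ha
      rw [Finset.mem_filter] at ha
      have hja : j ≤ a := cw_mem_le h a j ha.2
      rw [Finset.mem_Ico]
      refine ⟨hja, ?_⟩
      rcases Nat.lt_or_ge a i with hai | hai
      · exact hai
      · exact absurd (cw_down h a j ha.2 i hji hai) hnot
    have := Finset.card_le_card hsub
    rw [Nat.card_Ico] at this
    unfold multCW at hlt
    omega

lemma cw_mult_le (h : IsCodeWord m k A) (j : ℕ) : multCW k A j ≤ k + 1 - j := by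
  have hsub : (Finset.Icc 1 k).filter (fun i' => j ∈ A i') ⊆ Finset.Icc j k := by
    intro a ha
    rw [Finset.mem_filter, Finset.mem_Icc] at ha
    rw [Finset.mem_Icc]
    exact ⟨cw_mem_le h a j ha.2, ha.1.2⟩
  have := Finset.card_le_card hsub
  rw [Nat.card_Icc] at this
  unfold multCW
  omega

lemma cw_Ak (h : IsCodeWord m k A) :
    A k = (Finset.Icc 2 k).filter (fun j => multCW k A j = k + 1 - j) := by
  ext j
  rw [cw_mem_iff h, Finset.mem_filter, Finset.mem_Icc]
  have := cw_mult_le h j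
  omega

/-- reconstruction of a code word from multiplicities -/
def mkA (k : ℕ) (f : ℕ → ℕ) : ℕ → Finset ℕ :=
  fun i => (Finset.Icc 2 k).filter (fun j => j ≤ i ∧ i < j + f j)

lemma mkA_isCodeWord (hm : 2 ≤ m) (hk1 : 1 ≤ k) (hkm : k ≤ m) {f : ℕ → ℕ}
    (hf : ∀ j, 2 ≤ j → j ≤ k → f j ≤ k + 1 - j) : IsCodeWord m k (mkA k f) := by
  refine ⟨?_, ?_, ?_, ?_, ?_⟩
  · ext j
    simp only [mkA, Finset.mem_filter, Finset.mem_Icc, Finset.notMem_empty, iff_false]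
    rintro ⟨⟨h2, -⟩, h3, -⟩
    omega
  · intro i _ _ x hx
    simp only [mkA, Finset.mem_filter, Finset.mem_Icc] at hx
    exact hx.1.1
  · intro j h2 hjk x hx
    simp only [mkA, Finset.mem_filter, Finset.mem_Icc] at hx
    rw [Finset.mem_union, Finset.mem_singleton]
    rcases Nat.eq_or_lt_of_le hx.2.1 with rfl | hlt
    · exact Or.inr rfl
    · refine Or.inl ?_
      simp only [mkA, Finset.mem_filter, Finset.mem_Icc]
      exact ⟨hx.1, by omega, by omega⟩
  · intro i _ _
    have hsub : mkA k f i ⊆ Finset.Icc 2 k := Finset.filter_subset _ _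
    have := Finset.card_le_card hsub
    rw [Nat.card_Icc] at this
    omega
  · intro i hi
    ext j
    simp only [mkA, Finset.mem_filter, Finset.mem_Icc, Finset.notMem_empty, iff_false]
    rintro ⟨⟨h2, hjk⟩, hji, hlt⟩
    have := hf j h2 hjk
    omega

lemma multCW_mkA {f : ℕ → ℕ} (hf : ∀ j, 2 ≤ j → j ≤ k → f j ≤ k + 1 - j)
    {j : ℕ} (h2 : 2 ≤ j) (hjk : j ≤ k) : multCW k (mkA k f) j = f j := by
  have hb := hf j h2 hjk
  unfold multCW
  have heq : (Finset.Icc 1 k).filter (fun i => j ∈ mkA k f i) = Finset.Ico j (j + f j) := by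
    ext i
    simp only [Finset.mem_filter, Finset.mem_Icc, Finset.mem_Ico, mkA]
    omega
  rw [heq, Nat.card_Ico]
  omega
/-- the parent function associated with a multiplicity function -/
def pfun (k : ℕ) (g : ℕ → ℕ) : ℕ → ℕ :=
  fun v => if 2 ≤ v ∧ v ≤ k then v - 1 - g (k + 2 - v) else 0

lemma pfun_valid (k : ℕ) (g : ℕ → ℕ) : ValidP k (pfun k g) := by
  intro v h1 hk
  unfold pfun
  split <;> omega

/-- the graph associated with a code word -/
def cwGraph (k : ℕ) (A : ℕ → Finset ℕ) : SimpleGraph (Fin (k + 1)) :=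
  mkGraph k (pfun k (multCW k A))

lemma count_pfun {k : ℕ} (hk1 : 1 ≤ k) (g : ℕ → ℕ)
    (hg : ∀ j, 2 ≤ j → j ≤ k → g j ≤ k + 1 - j) :
    ((Finset.Icc 1 k).filter (fun n => pfun k g n = 0)).card
      = 1 + ((Finset.Icc 2 k).filter (fun j => g j = k + 1 - j)).card := by
  classical
  have h1 : Finset.Icc 1 k = insert 1 (Finset.Icc 2 k) := by
    ext a; simp only [Finset.mem_insert, Finset.mem_Icc]; omega
  have hp1 : pfun k g 1 = 0 := by simp [pfun]
  rw [h1, Finset.filter_insert, if_pos hp1,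
    Finset.card_insert_of_notMem (by simp [Finset.mem_filter, Finset.mem_Icc])]
  have hcard : ((Finset.Icc 2 k).filter (fun n => pfun k g n = 0)).card
      = ((Finset.Icc 2 k).filter (fun j => g j = k + 1 - j)).card := by
    apply Finset.card_bij (fun v _ => k + 2 - v)
    · intro a ha
      rw [Finset.mem_filter, Finset.mem_Icc] at ha
      obtain ⟨⟨h2, hk'⟩, hp⟩ := ha
      rw [show pfun k g a = a - 1 - g (k + 2 - a) from if_pos ⟨h2, hk'⟩] at hp
      have hb := hg (k + 2 - a) (by omega) (by omega)
      rw [Finset.mem_filter, Finset.mem_Icc]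
      constructor
      · omega
      · omega
    · intro a ha b hb hab
      rw [Finset.mem_filter, Finset.mem_Icc] at ha hb
      omega
    · intro j hj
      rw [Finset.mem_filter, Finset.mem_Icc] at hj
      refine ⟨k + 2 - j, ?_, by omega⟩
      rw [Finset.mem_filter, Finset.mem_Icc]
      refine ⟨⟨by omega, by omega⟩, ?_⟩
      rw [show pfun k g (k + 2 - j) = (k + 2 - j) - 1 - g (k + 2 - (k + 2 - j)) from
        if_pos ⟨by omega, by omega⟩]
      rw [show k + 2 - (k + 2 - j) = j by omega, hj.2]
      omega
  omega

/-- For `1 ≤ k ≤ m` and `0 ≤ r ≤ k - 1`, the number of code words of length `k`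
over base dimension `m` whose last set has cardinality `r` equals the number of
increasing trees on `{0, 1, …, k}` in which the root `0` has degree `r + 1`. -/
theorem N_eq_increasingTrees (m k r : ℕ) (hm : 2 ≤ m) (hk1 : 1 ≤ k) (hkm : k ≤ m)
    (hr : r ≤ k - 1) :
    N m k r =
      {G : SimpleGraph (Fin (k + 1)) |
        IsIncreasingTree G ∧ (G.neighborSet 0).ncard = r + 1}.ncard := by
  classical
  -- the map is injective and surjective onto the target
  have hmaps : ∀ A, IsCodeWord m k A ∧ (A k).card = r →
      IsIncreasingTree (cwGraph k A) ∧ ((cwGraph k A).neighborSet 0).ncard = r + 1 := by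
    rintro A ⟨hA, hAr⟩
    have hv := pfun_valid k (multCW k A)
    refine ⟨mkGraph_isIncreasingTree hv, ?_⟩
    have := count_pfun hk1 (multCW k A) (fun j _ _ => cw_mult_le hA j)
    rw [show cwGraph k A = mkGraph k (pfun k (multCW k A)) from rfl,
      mkGraph_ncard_nbhd hv, this, ← cw_Ak hA, hAr, Nat.add_comm]
  have hinj : Set.InjOn (cwGraph k) {A | IsCodeWord m k A ∧ (A k).card = r} := by
    rintro A ⟨hA, -⟩ A' ⟨hA', -⟩ hFA
    have hvA := pfun_valid k (multCW k A)
    have hvA' := pfun_valid k (multCW k A')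
    have hveq : ∀ v, 1 ≤ v → v ≤ k →
        pfun k (multCW k A) v = pfun k (multCW k A') v := by
      intro v h1 hk'
      have hn' : v < k + 1 := by omega
      have hvne : (⟨v, hn'⟩ : Fin (k + 1)) ≠ 0 := fin_ne_zero_iff.mpr h1
      obtain ⟨w, -, huniq⟩ := mkGraph_existsUnique hvA hvne
      have e1 := huniq _ ⟨mkGraph_adj_parFin hvA hvne, parFin_lt hvA hvne⟩
      have hadj' : (mkGraph k (pfun k (multCW k A))).Adj ⟨v, hn'⟩
          (parFin (pfun k (multCW k A')) ⟨v, hn'⟩) := by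
        have h2 := mkGraph_adj_parFin hvA' hvne
        have : cwGraph k A' = cwGraph k A := hFA.symm
        rw [show cwGraph k A' = mkGraph k (pfun k (multCW k A')) from rfl,
          show cwGraph k A = mkGraph k (pfun k (multCW k A)) from rfl] at this
        rwa [this] at h2
      have e2 := huniq _ ⟨hadj', parFin_lt hvA' hvne⟩
      have e3 : parFin (pfun k (multCW k A)) ⟨v, hn'⟩
          = parFin (pfun k (multCW k A')) ⟨v, hn'⟩ := e1.trans e2.symm
      have e4 := congrArg Fin.val e3
      rwa [parFin_val hvA hvne, parFin_val hvA' hvne] at e4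
    have hmult : ∀ j, 2 ≤ j → j ≤ k → multCW k A j = multCW k A' j := by
      intro j h2 hjk
      have h := hveq (k + 2 - j) (by omega) (by omega)
      rw [show pfun k (multCW k A) (k + 2 - j)
          = (k + 2 - j) - 1 - multCW k A (k + 2 - (k + 2 - j)) from
            if_pos ⟨by omega, by omega⟩,
        show pfun k (multCW k A') (k + 2 - j)
          = (k + 2 - j) - 1 - multCW k A' (k + 2 - (k + 2 - j)) from
            if_pos ⟨by omega, by omega⟩,
        show k + 2 - (k + 2 - j) = j by omega] at h
      have b1 := cw_mult_le hA j
      have b2 := cw_mult_le hA' j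
      omega
    funext i
    ext x
    rw [cw_mem_iff hA, cw_mem_iff hA']
    by_cases hx : 2 ≤ x ∧ x ≤ k
    · rw [hmult x hx.1 hx.2]
    · omega
  have hsurj : ∀ G : SimpleGraph (Fin (k + 1)), IsIncreasingTree G →
      (G.neighborSet 0).ncard = r + 1 →
      ∃ A, (IsCodeWord m k A ∧ (A k).card = r) ∧ cwGraph k A = G := by
    intro G hG hdeg
    choose! C hC hCu using hG.2
    set P : ℕ → ℕ := fun n => if hn : n < k + 1 then (C ⟨n, hn⟩).val else 0 with hPdef
    have hPC : ∀ n (hn : n < k + 1), P n = (C ⟨n, hn⟩).val := by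
      intro n hn
      simp only [hPdef]
      rw [dif_pos hn]
    have hPlt : ∀ n, 1 ≤ n → n ≤ k → P n < n := by
      intro n h1 h2
      have hn' : n < k + 1 := by omega
      have hlt := (hC ⟨n, hn'⟩ (fin_ne_zero_iff.mpr h1)).2
      rw [Fin.lt_def] at hlt
      have hPn := hPC n hn'
      have he : (⟨n, hn'⟩ : Fin (k + 1)).val = n := rfl
      omega
    have hVP : ValidP k P := fun n h1 h2 => hPlt n h1 h2
    set f : ℕ → ℕ := fun j => if 2 ≤ j ∧ j ≤ k then k + 1 - j - P (k + 2 - j) else 0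
      with hfdef
    have hf : ∀ j, 2 ≤ j → j ≤ k → f j ≤ k + 1 - j := by
      intro j h2 hk'
      simp only [hfdef]
      rw [if_pos ⟨h2, hk'⟩]
      omega
    have hA : IsCodeWord m k (mkA k f) := mkA_isCodeWord hm hk1 hkm hf
    have hmult : ∀ j, 2 ≤ j → j ≤ k → multCW k (mkA k f) j = f j :=
      fun j h2 hk' => multCW_mkA hf h2 hk'
    have hpf : ∀ v, 1 ≤ v → v ≤ k → pfun k (multCW k (mkA k f)) v = P v := by
      intro v h1 hk'
      rcases Nat.lt_or_ge v 2 with hv2 | hv2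
      · have hv1 : v = 1 := by omega
        subst hv1
        have hp1 := hPlt 1 le_rfl hk'
        rw [show pfun k (multCW k (mkA k f)) 1 = 0 from if_neg (by omega)]
        omega
      · rw [show pfun k (multCW k (mkA k f)) v
            = v - 1 - multCW k (mkA k f) (k + 2 - v) from if_pos ⟨hv2, hk'⟩]
        rw [hmult (k + 2 - v) (by omega) (by omega)]
        simp only [hfdef]
        rw [if_pos ⟨(by omega : 2 ≤ k + 2 - v), (by omega : k + 2 - v ≤ k)⟩]
        rw [show k + 2 - (k + 2 - v) = v by omega]
        have := hPlt v (by omega) hk'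
        omega
    have hGP : mkGraph k P = G := by
      ext v w
      rw [mkGraph_adj hVP]
      constructor
      · rintro (⟨hv, hpv⟩ | ⟨hw, hpw⟩)
        · have hwC : w = C v := by
            apply Fin.ext
            rw [← hpv, hPC v.val v.isLt]
          rw [hwC]
          exact (hC v hv).1
        · have hvC : v = C w := by
            apply Fin.ext
            rw [← hpw, hPC w.val w.isLt]
          rw [hvC]
          exact (hC w hw).1.symm
      · intro hadj
        rcases lt_trichotomy w v with hlt | heq | hlt
        · left
          have hv : v ≠ 0 := by
            rw [fin_ne_zero_iff]
            have := Fin.lt_def.mp hlt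
            omega
          refine ⟨hv, ?_⟩
          have hwc := hCu v hv w ⟨hadj, hlt⟩
          rw [hPC v.val v.isLt]
          exact (congrArg Fin.val hwc.symm)
        · exact absurd heq.symm (G.ne_of_adj hadj)
        · right
          have hw : w ≠ 0 := by
            rw [fin_ne_zero_iff]
            have := Fin.lt_def.mp hlt
            omega
          refine ⟨hw, ?_⟩
          have hvc := hCu w hw v ⟨hadj.symm, hlt⟩
          rw [hPC w.val w.isLt]
          exact (congrArg Fin.val hvc.symm)
    have hgeq : cwGraph k (mkA k f) = G := by
      rw [show cwGraph k (mkA k f) = mkGraph k (pfun k (multCW k (mkA k f))) from rfl,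
        mkGraph_congr hpf, hGP]
    have hdeg' : ((Finset.Icc 1 k).filter (fun n => P n = 0)).card = r + 1 := by
      rw [← mkGraph_ncard_nbhd hVP, hGP]
      exact hdeg
    have hsplit : ((Finset.Icc 1 k).filter (fun n => P n = 0)).card
        = 1 + ((Finset.Icc 2 k).filter (fun n => P n = 0)).card := by
      rw [show Finset.Icc 1 k = insert 1 (Finset.Icc 2 k) by
        ext a; simp only [Finset.mem_insert, Finset.mem_Icc]; omega]
      rw [Finset.filter_insert,
        if_pos (Nat.lt_one_iff.mp (hPlt 1 le_rfl hk1)),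
        Finset.card_insert_of_notMem (by simp [Finset.mem_filter, Finset.mem_Icc])]
      omega
    have hAk2 : (mkA k f) k
        = (Finset.Icc 2 k).filter (fun j => P (k + 2 - j) = 0) := by
      rw [cw_Ak hA]
      apply Finset.filter_congr
      intro j hj
      rw [Finset.mem_Icc] at hj
      rw [hmult j hj.1 hj.2]
      simp only [hfdef]
      rw [if_pos hj]
      have := hPlt (k + 2 - j) (by omega) (by omega)
      constructor <;> intro <;> omega
    have hrefl : ((Finset.Icc 2 k).filter (fun j => P (k + 2 - j) = 0)).card
        = ((Finset.Icc 2 k).filter (fun n => P n = 0)).card := by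
      apply Finset.card_bij (fun j _ => k + 2 - j)
      · intro a ha
        rw [Finset.mem_filter, Finset.mem_Icc] at ha
        rw [Finset.mem_filter, Finset.mem_Icc]
        exact ⟨⟨by omega, by omega⟩, ha.2⟩
      · intro a ha b hb hab
        rw [Finset.mem_filter, Finset.mem_Icc] at ha hb
        omega
      · intro n hn
        rw [Finset.mem_filter, Finset.mem_Icc] at hn
        refine ⟨k + 2 - n, ?_, by omega⟩
        rw [Finset.mem_filter, Finset.mem_Icc]
        refine ⟨⟨by omega, by omega⟩, ?_⟩
        rw [show k + 2 - (k + 2 - n) = n by omega]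
        exact hn.2
    have hcardAk : ((mkA k f) k).card = r := by
      rw [hAk2, hrefl]
      omega
    exact ⟨mkA k f, ⟨hA, hcardAk⟩, hgeq⟩
  have himage : cwGraph k '' {A | IsCodeWord m k A ∧ (A k).card = r}
      = {G : SimpleGraph (Fin (k + 1)) |
          IsIncreasingTree G ∧ (G.neighborSet 0).ncard = r + 1} := by
    apply Set.Subset.antisymm
    · rintro _ ⟨A, hA, rfl⟩
      exact hmaps A hA
    · rintro G ⟨h1, h2⟩
      obtain ⟨A, hA, hFA⟩ := hsurj G h1 h2
      exact ⟨A, hA, hFA⟩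
  calc N m k r = {A : ℕ → Finset ℕ | IsCodeWord m k A ∧ (A k).card = r}.ncard := rfl
    _ = (cwGraph k '' {A | IsCodeWord m k A ∧ (A k).card = r}).ncard :=
        (Set.ncard_image_of_injOn hinj).symm
    _ = _ := by rw [himage]
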